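/- Let n ≥ 2, m = √(2/(n(n−1))), and let λ₁,…,λₙ be real numbers with λ_i > −m for all i. Set μ_i = (λ_i + m)^{-1} > 0. Then σ₂(λ) = 1 if and only if σ_{n−1}(μ)/σ_{n−2}(μ) = 1/((n−1)m), where σ_k denotes the k-th elementary symmetric polynomial. -/
import Mathlib


open scoped Real
open Real

/-- The `k`-th elementary symmetric polynomial in `n` variables. -/
noncomputable def esymm (n k : ℕ) (x : Fin n → ℝ) : ℝ :=
  ∑ s ∈ Finset.powersetCard k Finset.univ, ∏ i ∈ s, x i

lemma esymm_pos {n k : ℕ} (hk : k ≤ n) {x : Fin n → ℝ} (hx : ∀ i, 0 < x i) :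
    0 < esymm n k x := by
  unfold esymm
  apply Finset.sum_pos
  · exact fun s _ => Finset.prod_pos fun i _ => hx i
  · exact Finset.powersetCard_nonempty.2 (by simpa using hk)

lemma esymm_one' {n : ℕ} (x : Fin n → ℝ) : esymm n 1 x = ∑ i, x i := by
  simp [esymm, Finset.powersetCard_one]

/-- Complement identity: `σ_{n-k}(x) = (∏ x) * σ_k(x⁻¹)`. -/
lemma esymm_compl {n k : ℕ} (hk : k ≤ n) (x : Fin n → ℝ) (hx : ∀ i, x i ≠ 0) :
    esymm n (n - k) x = (∏ i, x i) * esymm n k (fun i => (x i)⁻¹) := by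
  unfold esymm
  rw [Finset.mul_sum]
  refine Finset.sum_nbij' (fun s => sᶜ) (fun s => sᶜ) ?_ ?_ ?_ ?_ ?_
  · intro s hs
    rw [Finset.mem_powersetCard_univ] at hs ⊢
    rw [Finset.card_compl, Fintype.card_fin, hs]
    try omega
  · intro s hs
    rw [Finset.mem_powersetCard_univ] at hs ⊢
    rw [Finset.card_compl, Fintype.card_fin, hs]
    try omega
  · intro s _; exact compl_compl s
  · intro s _; exact compl_compl s
  · intro s _
    rw [← Finset.prod_mul_prod_compl s x, mul_assoc, ← Finset.prod_mul_distrib]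
    have : ∀ i ∈ sᶜ, x i * (x i)⁻¹ = 1 := fun i _ => mul_inv_cancel₀ (hx i)
    rw [Finset.prod_congr rfl this, Finset.prod_const_one, mul_one]

lemma two_mul_esymm_two {n : ℕ} (x : Fin n → ℝ) :
    2 * esymm n 2 x = (∑ i, x i) ^ 2 - ∑ i, (x i) ^ 2 := by
  classical
  set T : Finset (Fin n × Fin n) := Finset.univ ×ˢ Finset.univ with hT
  have key : esymm n 2 x
      = ∑ p ∈ T.filter (fun p : Fin n × Fin n => p.1 < p.2), x p.1 * x p.2 := by
    unfold esymm
    refine (Finset.sum_bij (fun p _ => ({p.1, p.2} : Finset (Fin n))) ?_ ?_ ?_ ?_).symm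
    · intro p hp
      simp only [Finset.mem_filter] at hp
      rw [Finset.mem_powersetCard_univ]
      exact Finset.card_pair hp.2.ne
    · intro p hp q hq h
      simp only [Finset.mem_filter] at hp hq
      have h' : ({p.1, p.2} : Set (Fin n)) = ({q.1, q.2} : Set (Fin n)) := by
        have := congrArg (fun s : Finset (Fin n) => (s : Set (Fin n))) h
        simpa using this
      rcases Set.pair_eq_pair_iff.1 h' with ⟨h1, h2⟩ | ⟨h1, h2⟩
      · exact Prod.ext h1 h2
      · exact absurd (hp.2.trans (h2 ▸ hq.2) |>.trans_eq h1.symm) (lt_irrefl _)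
    · intro s hs
      rw [Finset.mem_powersetCard_univ] at hs
      obtain ⟨a, b, hab, rfl⟩ := Finset.card_eq_two.mp hs
      rcases hab.lt_or_gt with h | h
      · exact ⟨(a, b), by simp [hT, h], rfl⟩
      · exact ⟨(b, a), by simp [hT, h], by simp [Finset.pair_comm]⟩
    · intro p hp
      simp only [Finset.mem_filter] at hp
      exact (Finset.prod_pair hp.2.ne).symm
  have hsq : (∑ i, x i) ^ 2 = ∑ p ∈ T, x p.1 * x p.2 := by
    rw [sq, Finset.sum_mul_sum, hT, Finset.sum_product]
  have hsplit := Finset.sum_filter_add_sum_filter_not T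
    (fun p : Fin n × Fin n => p.1 < p.2) (fun p => x p.1 * x p.2)
  have hsplit2 := Finset.sum_filter_add_sum_filter_not
    (T.filter (fun p : Fin n × Fin n => ¬ p.1 < p.2))
    (fun p : Fin n × Fin n => p.2 < p.1) (fun p => x p.1 * x p.2)
  have hgt : (T.filter (fun p : Fin n × Fin n => ¬ p.1 < p.2)).filter
      (fun p : Fin n × Fin n => p.2 < p.1) = T.filter (fun p : Fin n × Fin n => p.2 < p.1) := by
    rw [Finset.filter_filter]
    exact Finset.filter_congr fun p _ => ⟨And.right, fun h => ⟨asymm h, h⟩⟩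
  have hdiag : (T.filter (fun p : Fin n × Fin n => ¬ p.1 < p.2)).filter
      (fun p : Fin n × Fin n => ¬ p.2 < p.1) = T.filter (fun p : Fin n × Fin n => p.1 = p.2) := by
    rw [Finset.filter_filter]
    refine Finset.filter_congr fun p _ => ⟨fun ⟨h1, h2⟩ => le_antisymm (not_lt.mp h2) (not_lt.mp h1),
      fun h => ⟨by simp [h], by simp [h]⟩⟩
  have hswap : ∑ p ∈ T.filter (fun p : Fin n × Fin n => p.2 < p.1), x p.1 * x p.2
      = ∑ p ∈ T.filter (fun p : Fin n × Fin n => p.1 < p.2), x p.1 * x p.2 := by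
    refine Finset.sum_nbij' Prod.swap Prod.swap ?_ ?_ ?_ ?_ ?_
    · intro p hp; simp only [Finset.mem_filter, hT] at hp ⊢; exact ⟨by simp, hp.2⟩
    · intro p hp; simp only [Finset.mem_filter, hT] at hp ⊢; exact ⟨by simp, hp.2⟩
    · intro p _; simp
    · intro p _; simp
    · intro p _; exact mul_comm _ _
  have hdiagsum : ∑ p ∈ T.filter (fun p : Fin n × Fin n => p.1 = p.2), x p.1 * x p.2
      = ∑ i, (x i) ^ 2 := by
    refine Finset.sum_nbij' (fun p => p.1) (fun i => (i, i)) ?_ ?_ ?_ ?_ ?_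
    · intro p _; simp
    · intro i _; simp [hT]
    · intro p hp
      simp only [Finset.mem_filter] at hp
      exact Prod.ext rfl hp.2
    · intro i _; rfl
    · intro p hp
      simp only [Finset.mem_filter] at hp
      rw [← hp.2, sq]
  rw [key, hsq]
  rw [hgt, hdiag, hswap, hdiagsum] at hsplit2
  linarith [hsplit, hsplit2]

lemma esymm_two_shift {n : ℕ} (m : ℝ) (x y : Fin n → ℝ) (hy : ∀ i, y i = x i - m) :
    esymm n 2 y = esymm n 2 x - ((n : ℝ) - 1) * m * (∑ i, x i)
      + (n : ℝ) * ((n : ℝ) - 1) * m ^ 2 / 2 := by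
  have h1 := two_mul_esymm_two x
  have h2 := two_mul_esymm_two y
  have h3 : ∑ i, y i = (∑ i, x i) - (n : ℝ) * m := by
    simp_rw [hy]
    rw [Finset.sum_sub_distrib, Finset.sum_const, Finset.card_univ, Fintype.card_fin,
      nsmul_eq_mul]
  have h4 : ∑ i, (y i) ^ 2 = (∑ i, (x i) ^ 2) - 2 * m * (∑ i, x i) + (n : ℝ) * m ^ 2 := by
    have e : ∀ i : Fin n, (y i) ^ 2 = (x i) ^ 2 - 2 * m * (x i) + m ^ 2 := fun i => by
      rw [hy]; ring
    simp_rw [e]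
    rw [Finset.sum_add_distrib, Finset.sum_sub_distrib, ← Finset.mul_sum, Finset.sum_const,
      Finset.card_univ, Fintype.card_fin, nsmul_eq_mul]
  rw [h3, h4] at h2
  linear_combination (h2 - h1) / 2

/-- Legendre–Lewy identity: with `m = √(2/(n(n−1)))`, `λ_i > −m` and `μ_i = (λ_i + m)⁻¹`,
one has `σ₂(λ) = 1 ↔ σ_{n−1}(μ)/σ_{n−2}(μ) = 1/((n−1)m)`. -/
theorem sigma2_iff_Lambda {n : ℕ} (hn : 2 ≤ n) (m : ℝ)
    (hm : m = Real.sqrt (2 / (n * (n - 1))))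
    (lam mu : Fin n → ℝ) (hlam : ∀ i, -m < lam i)
    (hmu : ∀ i, mu i = (lam i + m)⁻¹) :
    esymm n 2 lam = 1 ↔
      esymm n (n - 1) mu / esymm n (n - 2) mu = 1 / ((n - 1) * m) := by
  have hn1 : (0 : ℝ) < (n : ℝ) - 1 := by
    have : (2 : ℝ) ≤ (n : ℝ) := by exact_mod_cast hn
    linarith
  have hnn : (0 : ℝ) < (n : ℝ) * ((n : ℝ) - 1) := by positivity
  have hmpos : 0 < m := by
    rw [hm]
    exact Real.sqrt_pos.mpr (by positivity)
  have hm2 : (n : ℝ) * ((n : ℝ) - 1) * m ^ 2 = 2 := by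
    rw [hm, Real.sq_sqrt (by positivity)]
    field_simp
  have hlm : ∀ i, 0 < lam i + m := fun i => by linarith [hlam i]
  have hmupos : ∀ i, 0 < mu i := fun i => by rw [hmu i]; exact inv_pos.mpr (hlm i)
  have hmune : ∀ i, mu i ≠ 0 := fun i => (hmupos i).ne'
  have hnu : ∀ i, 0 < (mu i)⁻¹ := fun i => inv_pos.mpr (hmupos i)
  have hlameq : ∀ i, lam i = (mu i)⁻¹ - m := fun i => by
    rw [hmu i, inv_inv]; ring
  set x : Fin n → ℝ := fun i => (mu i)⁻¹ with hx
  have hshift := esymm_two_shift m x lam (fun i => hlameq i)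
  have hA : esymm n (n - 1) mu = (∏ i, mu i) * esymm n 1 x :=
    esymm_compl (by omega) mu hmune
  have hB : esymm n (n - 2) mu = (∏ i, mu i) * esymm n 2 x :=
    esymm_compl (by omega) mu hmune
  have hP : 0 < ∏ i, mu i := Finset.prod_pos fun i _ => hmupos i
  have hS : esymm n 1 x = ∑ i, x i := esymm_one' x
  have hSpos : 0 < ∑ i, x i := Finset.sum_pos (fun i _ => hnu i) ⟨⟨0, by omega⟩, Finset.mem_univ _⟩
  have hE2pos : 0 < esymm n 2 x := esymm_pos hn (fun i => hnu i)
  have hone : (n : ℝ) * ((n : ℝ) - 1) * m ^ 2 / 2 = 1 := by linarith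
  rw [hshift, hone, hA, hB, hS]
  have hden1 : (∏ i, mu i) * esymm n 2 x ≠ 0 := by positivity
  have hden2 : ((n : ℝ) - 1) * m ≠ 0 := by positivity
  rw [div_eq_div_iff hden1 hden2]
  constructor
  · intro h
    have hE : esymm n 2 x = ((n : ℝ) - 1) * m * (∑ i, x i) := by linarith
    linear_combination (-(∏ i, mu i)) * hE
  · intro h
    have h2 : (∏ i, mu i) * ((∑ i, x i) * (((n : ℝ) - 1) * m))
        = (∏ i, mu i) * esymm n 2 x := by linear_combination h
    have hE := mul_left_cancel₀ hP.ne' h2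
    linear_combination -hE
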